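/- Discrete setting. Let T^h : X → X be linear with T^h 1 ≠ 0, g^h ∈ X, α : Ω^h → (0,∞), and let δ > ‖T^h‖², where ‖T^h‖ is the operator norm of T^h with respect to ‖·‖₂. Define z(a) := a − (1/δ)(T^h)ᵀ(T^h a − g^h) and the surrogate functional S(u,a) := (1/2)‖T^h u − g^h‖₂² + R_α(u) + (δ/2)‖u − a‖₂² − (1/2)‖T^h(u − a)‖₂². Then for every u₀ ∈ X, the map u ↦ S(u, a) has a unique minimizer for each a ∈ X, and the iteration u_{n+1} := argmin_{u ∈ X} S(u, u_n) generates a sequence (u_n) that converges to a minimizer of J₂(u,α) = (1/2)‖T^h u − g^h‖₂² + R_α(u) over X. -/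

import Mathlib

open scoped BigOperators

noncomputable section

/-- The discrete image space `X = ℝ^{N₁×N₂}` with the `ℓ²` norm. -/
abbrev Xg (N₁ N₂ : ℕ) : Type := EuclideanSpace ℝ (Fin N₁ × Fin N₂)

/-- Discrete gradient by forward differences (zero at the right/bottom boundary). -/
def gradh {N₁ N₂ : ℕ} (u : Xg N₁ N₂) (x : Fin N₁ × Fin N₂) : ℝ × ℝ :=
  (if h : (x.1 : ℕ) + 1 < N₁ then u (⟨(x.1 : ℕ) + 1, h⟩, x.2) - u x else 0,
   if h : (x.2 : ℕ) + 1 < N₂ then u (x.1, ⟨(x.2 : ℕ) + 1, h⟩) - u x else 0)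

/-- Weighted discrete total variation `R_α(u) = Σ_x α(x)|∇^h u(x)|_{ℓ²}`. -/
def Ralpha {N₁ N₂ : ℕ} (α : Fin N₁ × Fin N₂ → ℝ) (u : Xg N₁ N₂) : ℝ :=
  ∑ x : Fin N₁ × Fin N₂,
    α x * Real.sqrt ((gradh u x).1 ^ 2 + (gradh u x).2 ^ 2)

/-- The `ℓ¹` norm on `X`. -/
def l1norm {N₁ N₂ : ℕ} (u : Xg N₁ N₂) : ℝ :=
  ∑ x : Fin N₁ × Fin N₂, |u x|

/-- The surrogate functional
`S(u,a) = (1/2)‖Tu-g‖₂² + R_α(u) + (δ/2)‖u-a‖₂² - (1/2)‖T(u-a)‖₂²`. -/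
def Sur {N₁ N₂ : ℕ} (T : Xg N₁ N₂ →L[ℝ] Xg N₁ N₂) (g : Xg N₁ N₂)
    (α : Fin N₁ × Fin N₂ → ℝ) (δ : ℝ) (u a : Xg N₁ N₂) : ℝ :=
  (1 / 2) * ‖T u - g‖ ^ 2 + Ralpha α u + (δ / 2) * ‖u - a‖ ^ 2
    - (1 / 2) * ‖T (u - a)‖ ^ 2

open scoped RealInnerProductSpace

namespace Stmt13Aux

def nrm2 (a b : ℝ) : ℝ := Real.sqrt (a ^ 2 + b ^ 2)

lemma nrm2_nonneg (a b : ℝ) : 0 ≤ nrm2 a b := Real.sqrt_nonneg _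

lemma nrm2_eq (a b : ℝ) : nrm2 a b = ‖(⟨a, b⟩ : ℂ)‖ := by
  rw [nrm2, Complex.norm_def, Complex.normSq_mk]; ring_nf

lemma nrm2_add_le (a b c d : ℝ) : nrm2 (a + b) (c + d) ≤ nrm2 a c + nrm2 b d := by
  rw [nrm2_eq, nrm2_eq, nrm2_eq]
  have : (⟨a + b, c + d⟩ : ℂ) = (⟨a, c⟩ : ℂ) + (⟨b, d⟩ : ℂ) := by
    apply Complex.ext <;> simp
  rw [this]
  exact norm_add_le _ _

lemma nrm2_smul (r a b : ℝ) : nrm2 (r * a) (r * b) = |r| * nrm2 a b := by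
  rw [nrm2_eq, nrm2_eq]
  have : (⟨r * a, r * b⟩ : ℂ) = (r : ℂ) * (⟨a, b⟩ : ℂ) := by
    apply Complex.ext <;> simp
  rw [this, norm_mul, Complex.norm_real, Real.norm_eq_abs]

variable {N₁ N₂ : ℕ}

lemma gradh_combo {u v : Xg N₁ N₂} {a b : ℝ} :
    ∀ x, gradh (a • u + b • v) x = a • gradh u x + b • gradh v x := by
  intro x
  simp only [gradh, Prod.smul_mk, Prod.mk_add_mk, Prod.mk.injEq]
  constructor <;> (split <;> simp [smul_eq_mul] <;> ring)

lemma Ralpha_eq (α : Fin N₁ × Fin N₂ → ℝ) (u : Xg N₁ N₂) :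
    Ralpha α u = ∑ x : Fin N₁ × Fin N₂, α x * nrm2 (gradh u x).1 (gradh u x).2 := rfl

lemma Ralpha_nonneg {α : Fin N₁ × Fin N₂ → ℝ} (hα : ∀ x, 0 ≤ α x) (u : Xg N₁ N₂) :
    0 ≤ Ralpha α u :=
  Finset.sum_nonneg fun x _ => mul_nonneg (hα x) (Real.sqrt_nonneg _)

lemma Ralpha_convex {α : Fin N₁ × Fin N₂ → ℝ} (hα : ∀ x, 0 ≤ α x) (u v : Xg N₁ N₂)
    {t : ℝ} (h0 : 0 ≤ t) (h1 : t ≤ 1) :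
    Ralpha α ((1 - t) • u + t • v) ≤ (1 - t) * Ralpha α u + t * Ralpha α v := by
  rw [Ralpha_eq, Ralpha_eq, Ralpha_eq, Finset.mul_sum, Finset.mul_sum,
    ← Finset.sum_add_distrib]
  apply Finset.sum_le_sum
  intro x _
  rw [gradh_combo]
  have h1 : ((1 - t) • gradh u x + t • gradh v x).1
      = (1 - t) * (gradh u x).1 + t * (gradh v x).1 := rfl
  have h2 : ((1 - t) • gradh u x + t • gradh v x).2
      = (1 - t) * (gradh u x).2 + t * (gradh v x).2 := rfl
  rw [h1, h2]
  have key : nrm2 ((1 - t) * (gradh u x).1 + t * (gradh v x).1)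
        ((1 - t) * (gradh u x).2 + t * (gradh v x).2)
      ≤ (1-t) * nrm2 (gradh u x).1 (gradh u x).2 + t * nrm2 (gradh v x).1 (gradh v x).2 := by
    refine le_trans (nrm2_add_le _ _ _ _) (le_of_eq ?_)
    rw [nrm2_smul, nrm2_smul, abs_of_nonneg h0, abs_of_nonneg (by linarith : (0:ℝ) ≤ 1 - t)]
  have := mul_le_mul_of_nonneg_left key (hα x)
  nlinarith [this]


lemma Ralpha_smul (α : Fin N₁ × Fin N₂ → ℝ) (c : ℝ) (u : Xg N₁ N₂) :
    Ralpha α (c • u) = |c| * Ralpha α u := by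
  rw [Ralpha_eq, Ralpha_eq, Finset.mul_sum]
  apply Finset.sum_congr rfl
  intro x _
  have h : c • u = c • u + (0:ℝ) • (0 : Xg N₁ N₂) := by simp
  have hg : gradh (c • u) x = c • gradh u x := by
    rw [h, gradh_combo]; simp [gradh]
  rw [hg]
  have h1 : (c • gradh u x).1 = c * (gradh u x).1 := rfl
  have h2 : (c • gradh u x).2 = c * (gradh u x).2 := rfl
  rw [h1, h2, nrm2_smul]; ring

lemma continuous_eval (p : Fin N₁ × Fin N₂) : Continuous fun u : Xg N₁ N₂ => u p :=
  (EuclideanSpace.proj p).continuous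

lemma continuous_gradh_fst (x : Fin N₁ × Fin N₂) :
    Continuous fun u : Xg N₁ N₂ => (gradh u x).1 := by
  simp only [gradh]
  split
  · exact ((continuous_eval _).sub (continuous_eval _))
  · exact continuous_const

lemma continuous_gradh_snd (x : Fin N₁ × Fin N₂) :
    Continuous fun u : Xg N₁ N₂ => (gradh u x).2 := by
  simp only [gradh]
  split
  · exact ((continuous_eval _).sub (continuous_eval _))
  · exact continuous_const

lemma Ralpha_continuous (α : Fin N₁ × Fin N₂ → ℝ) : Continuous (Ralpha α) := by
  apply continuous_finset_sum
  intro x _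
  exact continuous_const.mul (Real.continuous_sqrt.comp
    (((continuous_gradh_fst x).pow 2).add ((continuous_gradh_snd x).pow 2)))

lemma grad_zero_const {u : Xg N₁ N₂} (hN₁ : 1 ≤ N₁) (hN₂ : 1 ≤ N₂)
    (h : ∀ x, gradh u x = 0) :
    ∀ p : Fin N₁ × Fin N₂, u p = u (⟨0, hN₁⟩, ⟨0, hN₂⟩) := by
  have hrow : ∀ (i : ℕ) (hi : i < N₁) (j : Fin N₂), u (⟨i, hi⟩, j) = u (⟨0, hN₁⟩, j) := by
    intro i
    induction i with
    | zero => intro hi j; rfl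
    | succ i ih =>
      intro hi j
      have hi' : i < N₁ := Nat.lt_of_succ_lt hi
      have h1 := congrArg Prod.fst (h (⟨i, hi'⟩, j))
      simp only [gradh] at h1
      rw [dif_pos hi] at h1
      have : u (⟨i + 1, hi⟩, j) = u (⟨i, hi'⟩, j) := by
        have : u (⟨i + 1, hi⟩, j) - u (⟨i, hi'⟩, j) = 0 := h1
        linarith
      rw [this, ih hi' j]
  have hcol : ∀ (j : ℕ) (hj : j < N₂), u (⟨0, hN₁⟩, ⟨j, hj⟩) = u (⟨0, hN₁⟩, ⟨0, hN₂⟩) := by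
    intro j
    induction j with
    | zero => intro hj; rfl
    | succ j ih =>
      intro hj
      have hj' : j < N₂ := Nat.lt_of_succ_lt hj
      have h2 := congrArg Prod.snd (h (⟨0, hN₁⟩, ⟨j, hj'⟩))
      simp only [gradh] at h2
      rw [dif_pos hj] at h2
      have : u (⟨0, hN₁⟩, ⟨j + 1, hj⟩) = u (⟨0, hN₁⟩, ⟨j, hj'⟩) := by
        have : u (⟨0, hN₁⟩, ⟨j + 1, hj⟩) - u (⟨0, hN₁⟩, ⟨j, hj'⟩) = 0 := h2
        linarith
      rw [this, ih hj']
  rintro ⟨⟨i, hi⟩, ⟨j, hj⟩⟩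
  rw [hrow i hi ⟨j, hj⟩, hcol j hj]

section Gthy

variable {E : Type*} [NormedAddCommGroup E] [InnerProductSpace ℝ E] [FiniteDimensional ℝ E]

/-- The model functional `G_z(u) = (δ/2)‖u-z‖² + φ(u)`. -/
def Gf (φ : E → ℝ) (δ : ℝ) (z u : E) : ℝ := δ / 2 * ‖u - z‖ ^ 2 + φ u

lemma norm_combo (x y : E) (t : ℝ) :
    ‖(1 - t) • x + t • y‖ ^ 2 = (1 - t) * ‖x‖ ^ 2 + t * ‖y‖ ^ 2 - t * (1 - t) * ‖x - y‖ ^ 2 := by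
  simp only [← real_inner_self_eq_norm_sq, inner_add_add_self, inner_sub_sub_self,
    real_inner_smul_left, real_inner_smul_right]
  ring

lemma Gf_exists_min {φ : E → ℝ} {δ : ℝ} (hδ : 0 < δ) (hc : Continuous φ)
    (h0 : ∀ u, 0 ≤ φ u) (z : E) : ∃ m, ∀ u, Gf φ δ z m ≤ Gf φ δ z u := by
  have harg : (0:ℝ) ≤ 2 * φ z / δ := div_nonneg (by linarith [h0 z]) hδ.le
  have hRpos : (0:ℝ) < Real.sqrt (2 * φ z / δ) + 1 := by positivity
  obtain ⟨m, hmK, hmin⟩ := (isCompact_closedBall z (Real.sqrt (2 * φ z / δ) + 1)).exists_isMinOn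
    ⟨z, Metric.mem_closedBall_self hRpos.le⟩
    ((continuous_const.mul (((continuous_id.sub continuous_const).norm).pow 2)).add
      hc).continuousOn
  refine ⟨m, fun u => ?_⟩
  by_cases hu : u ∈ Metric.closedBall z (Real.sqrt (2 * φ z / δ) + 1)
  · exact hmin hu
  · have hd : Real.sqrt (2 * φ z / δ) + 1 ≤ ‖u - z‖ := by
      have := not_le.mp (Metric.mem_closedBall.not.mp hu)
      rw [dist_eq_norm] at this
      linarith
    have h2 := Real.sq_sqrt harg
    have hsq : 2 * φ z / δ ≤ ‖u - z‖ ^ 2 := by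
      nlinarith [Real.sqrt_nonneg (2 * φ z / δ)]
    have hGz : Gf φ δ z z ≤ Gf φ δ z u := by
      have hphi : φ z ≤ δ / 2 * ‖u - z‖ ^ 2 := by
        rw [div_le_iff₀ hδ] at hsq
        nlinarith
      simp only [Gf, sub_self, norm_zero]
      nlinarith [h0 u]
    exact le_trans (hmin (Metric.mem_closedBall_self hRpos.le)) hGz

lemma Gf_strong {φ : E → ℝ} {δ : ℝ} (hδ : 0 < δ)
    (hconv : ∀ u v : E, ∀ t : ℝ, 0 ≤ t → t ≤ 1 →
      φ ((1 - t) • u + t • v) ≤ (1 - t) * φ u + t * φ v)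
    {z m : E} (hm : ∀ u, Gf φ δ z m ≤ Gf φ δ z u) :
    ∀ u, Gf φ δ z m + δ / 2 * ‖u - m‖ ^ 2 ≤ Gf φ δ z u := by
  intro u
  have key : ∀ t : ℝ, 0 < t → t ≤ 1 →
      Gf φ δ z m + δ / 2 * (1 - t) * ‖u - m‖ ^ 2 ≤ Gf φ δ z u := by
    intro t ht0 ht1
    have hco : ((1 - t) • m + t • u) - z = (1 - t) • (m - z) + t • (u - z) := by
      module
    have hmix : Gf φ δ z ((1 - t) • m + t • u)
        ≤ (1 - t) * Gf φ δ z m + t * Gf φ δ z u - δ / 2 * t * (1 - t) * ‖u - m‖ ^ 2 := by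
      simp only [Gf]
      have hq : ‖((1 - t) • m + t • u) - z‖ ^ 2
          = (1 - t) * ‖m - z‖ ^ 2 + t * ‖u - z‖ ^ 2 - t * (1 - t) * ‖(m - z) - (u - z)‖ ^ 2 := by
        rw [hco, norm_combo]
      have hmz : (m - z) - (u - z) = m - u := by abel
      have hmu : ‖m - u‖ = ‖u - m‖ := norm_sub_rev _ _
      rw [hq, hmz, hmu]
      have := hconv m u t ht0.le ht1
      nlinarith
    have := hm ((1 - t) • m + t • u)
    have h2 : Gf φ δ z m + δ / 2 * t * (1 - t) * ‖u - m‖ ^ 2 ≤ t * Gf φ δ z u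
        + (1 - t) * Gf φ δ z m := by linarith
    have h3 : t * (Gf φ δ z m + δ / 2 * (1 - t) * ‖u - m‖ ^ 2) ≤ t * Gf φ δ z u := by
      nlinarith
    exact le_of_mul_le_mul_left (by linarith) ht0
  have hlim : Filter.Tendsto
      (fun n : ℕ => Gf φ δ z m + δ / 2 * (1 - 1 / (n + 1)) * ‖u - m‖ ^ 2)
      Filter.atTop (nhds (Gf φ δ z m + δ / 2 * (1 - 0) * ‖u - m‖ ^ 2)) := by
    apply Filter.Tendsto.add tendsto_const_nhds
    apply Filter.Tendsto.mul_const
    apply Filter.Tendsto.const_mul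
    exact Filter.Tendsto.const_sub _ tendsto_one_div_add_atTop_nhds_zero_nat
  have hle := le_of_tendsto' hlim (fun n => by
    refine key (1 / (n + 1)) (by positivity) ?_
    rw [div_le_one (by positivity)]
    linarith [Nat.cast_nonneg (α := ℝ) n])
  calc Gf φ δ z m + δ / 2 * ‖u - m‖ ^ 2
      = Gf φ δ z m + δ / 2 * (1 - 0) * ‖u - m‖ ^ 2 := by norm_num
    _ ≤ Gf φ δ z u := hle

lemma Gf_unique {φ : E → ℝ} {δ : ℝ} (hδ : 0 < δ)
    (hconv : ∀ u v : E, ∀ t : ℝ, 0 ≤ t → t ≤ 1 →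
      φ ((1 - t) • u + t • v) ≤ (1 - t) * φ u + t * φ v)
    {z m m' : E} (hm : ∀ u, Gf φ δ z m ≤ Gf φ δ z u) (hm' : ∀ u, Gf φ δ z m' ≤ Gf φ δ z u) :
    m' = m := by
  have h1 := Gf_strong hδ hconv hm m'
  have h2 := hm' m
  have : ‖m' - m‖ ^ 2 ≤ 0 := by nlinarith
  have : ‖m' - m‖ = 0 := by nlinarith [norm_nonneg (m' - m), sq_nonneg (‖m' - m‖)]
  have := norm_sub_eq_zero_iff.mp this
  exact this

lemma Gf_nonexpansive {φ : E → ℝ} {δ : ℝ} (hδ : 0 < δ)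
    (hconv : ∀ u v : E, ∀ t : ℝ, 0 ≤ t → t ≤ 1 →
      φ ((1 - t) • u + t • v) ≤ (1 - t) * φ u + t * φ v)
    {z z' m m' : E} (hm : ∀ u, Gf φ δ z m ≤ Gf φ δ z u)
    (hm' : ∀ u, Gf φ δ z' m' ≤ Gf φ δ z' u) :
    ‖m - m'‖ ≤ ‖z - z'‖ := by
  have h1 := Gf_strong hδ hconv hm m'
  have h2 := Gf_strong hδ hconv hm' m
  simp only [Gf] at h1 h2
  have hinner : ‖m - m'‖ ^ 2 ≤ ⟪m - m', z - z'⟫ := by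
    have e1 : ‖m - z‖ ^ 2 = ‖m‖ ^ 2 - 2 * ⟪m, z⟫ + ‖z‖ ^ 2 := norm_sub_sq_real m z
    have e2 : ‖m' - z‖ ^ 2 = ‖m'‖ ^ 2 - 2 * ⟪m', z⟫ + ‖z‖ ^ 2 := norm_sub_sq_real m' z
    have e3 : ‖m - z'‖ ^ 2 = ‖m‖ ^ 2 - 2 * ⟪m, z'⟫ + ‖z'‖ ^ 2 := norm_sub_sq_real m z'
    have e4 : ‖m' - z'‖ ^ 2 = ‖m'‖ ^ 2 - 2 * ⟪m', z'⟫ + ‖z'‖ ^ 2 := norm_sub_sq_real m' z'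
    have e5 : ‖m - m'‖ ^ 2 = ‖m‖ ^ 2 - 2 * ⟪m, m'⟫ + ‖m'‖ ^ 2 := norm_sub_sq_real m m'
    have e6 : ‖m' - m‖ ^ 2 = ‖m'‖ ^ 2 - 2 * ⟪m', m⟫ + ‖m‖ ^ 2 := norm_sub_sq_real m' m
    have e7 : ⟪m - m', z - z'⟫ = ⟪m, z⟫ - ⟪m, z'⟫ - ⟪m', z⟫ + ⟪m', z'⟫ := by
      rw [inner_sub_left, inner_sub_right, inner_sub_right]; ring
    have e8 : ⟪m', m⟫ = ⟪m, m'⟫ := real_inner_comm _ _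
    rw [e1, e2, e6] at h1
    rw [e3, e4, e5] at h2
    rw [e5, e7]
    rw [e8] at h1
    nlinarith
  rcases eq_or_lt_of_le (norm_nonneg (m - m')) with h | h
  · rw [← h]; exact norm_nonneg _
  · have hcs := real_inner_le_norm (m - m') (z - z')
    have : ‖m - m'‖ ^ 2 ≤ ‖m - m'‖ * ‖z - z'‖ := le_trans hinner hcs
    nlinarith

end Gthy

section Zthy

variable {N₁ N₂ : ℕ}

def Zmap (T : Xg N₁ N₂ →L[ℝ] Xg N₁ N₂) (g : Xg N₁ N₂) (δ : ℝ) (a : Xg N₁ N₂) : Xg N₁ N₂ :=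
  a - δ⁻¹ • (ContinuousLinearMap.adjoint T) (T a - g)

lemma norm_smul_sq (c : ℝ) (hc : 0 ≤ c) (x : Xg N₁ N₂) : ‖c • x‖ ^ 2 = c ^ 2 * ‖x‖ ^ 2 := by
  rw [norm_smul, Real.norm_eq_abs, abs_of_nonneg hc, mul_pow]

lemma Sur_eq (T : Xg N₁ N₂ →L[ℝ] Xg N₁ N₂) (g : Xg N₁ N₂) (α : Fin N₁ × Fin N₂ → ℝ)
    {δ : ℝ} (hδ : 0 < δ) (u a : Xg N₁ N₂) :
    Sur T g α δ u a = Gf (Ralpha α) δ (Zmap T g δ a) u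
      + (1 / 2 * ‖T a - g‖ ^ 2
        - 1 / (2 * δ) * ‖ContinuousLinearMap.adjoint T (T a - g)‖ ^ 2) := by
  set A := ContinuousLinearMap.adjoint T with hA
  set w := A (T a - g) with hw
  have hsplit : u - Zmap T g δ a = (u - a) + δ⁻¹ • w := by
    simp only [Zmap, ← hA, ← hw]
    module
  have hnrm : ‖u - Zmap T g δ a‖ ^ 2
      = ‖u - a‖ ^ 2 + 2 * (δ⁻¹ * ⟪u - a, w⟫) + δ⁻¹ ^ 2 * ‖w‖ ^ 2 := by
    rw [hsplit, norm_add_sq_real, real_inner_smul_right,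
      norm_smul_sq δ⁻¹ (by positivity) w]
  have hiw : ⟪u - a, w⟫ = ⟪T a - g, T u - T a⟫ := by
    rw [real_inner_comm, hw, ContinuousLinearMap.adjoint_inner_left, map_sub]
  have hTua : T (u - a) = T u - T a := map_sub T u a
  have e1 : ‖T u - g‖ ^ 2 = ‖T u‖ ^ 2 - 2 * ⟪T u, g⟫ + ‖g‖ ^ 2 := norm_sub_sq_real _ _
  have e2 : ‖T u - T a‖ ^ 2 = ‖T u‖ ^ 2 - 2 * ⟪T u, T a⟫ + ‖T a‖ ^ 2 := norm_sub_sq_real _ _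
  have e3 : ‖T a - g‖ ^ 2 = ‖T a‖ ^ 2 - 2 * ⟪T a, g⟫ + ‖g‖ ^ 2 := norm_sub_sq_real _ _
  have e4 : ⟪T a - g, T u - T a⟫
      = ⟪T u, T a⟫ - ‖T a‖ ^ 2 - ⟪T u, g⟫ + ⟪T a, g⟫ := by
    rw [inner_sub_left, inner_sub_right, inner_sub_right, real_inner_self_eq_norm_sq,
      real_inner_comm (T a) (T u), real_inner_comm g (T u), real_inner_comm g (T a)]
    ring
  simp only [Sur, Gf]
  rw [hnrm, hiw, hTua, e1, e2, e3, e4]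
  field_simp
  ring

lemma Zmap_nonexpansive (T : Xg N₁ N₂ →L[ℝ] Xg N₁ N₂) (g : Xg N₁ N₂)
    {δ : ℝ} (hδ : ‖T‖ ^ 2 < δ) (a b : Xg N₁ N₂) :
    ‖Zmap T g δ a - Zmap T g δ b‖ ≤ ‖a - b‖ := by
  have hδ0 : 0 < δ := lt_of_le_of_lt (sq_nonneg _) hδ
  set A := ContinuousLinearMap.adjoint T with hA
  set v := a - b with hv
  have hZ : Zmap T g δ a - Zmap T g δ b = v - δ⁻¹ • A (T v) := by
    have hmap : A (T v) = A (T a) - A (T b) := by rw [hv, map_sub, map_sub]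
    simp only [Zmap, ← hA, map_sub, hmap]
    module
  have hAnorm : ‖A (T v)‖ ≤ ‖T‖ * ‖T v‖ := by
    have := A.le_opNorm (T v)
    have hAn : ‖A‖ = ‖T‖ := ContinuousLinearMap.adjoint.norm_map T
    rwa [hAn] at this
  have hTv : ‖T v‖ ≤ ‖T‖ * ‖v‖ := T.le_opNorm v
  have hinner : ⟪v, δ⁻¹ • A (T v)⟫ = δ⁻¹ * ‖T v‖ ^ 2 := by
    rw [real_inner_smul_right, real_inner_comm, hA,
      ContinuousLinearMap.adjoint_inner_left, real_inner_self_eq_norm_sq]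
  have hsq : ‖Zmap T g δ a - Zmap T g δ b‖ ^ 2 ≤ ‖v‖ ^ 2 := by
    rw [hZ, norm_sub_sq_real, hinner, norm_smul_sq δ⁻¹ (by positivity) _]
    have h1 : ‖A (T v)‖ ^ 2 ≤ ‖T‖ ^ 2 * ‖T v‖ ^ 2 := by
      nlinarith [norm_nonneg (A (T v)), norm_nonneg (T v), norm_nonneg T]
    have h2 : δ⁻¹ ^ 2 * ‖A (T v)‖ ^ 2 ≤ δ⁻¹ * ‖T v‖ ^ 2 := by
      have hTd : ‖T‖ ^ 2 ≤ δ := hδ.le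
      have : δ⁻¹ ^ 2 * ‖A (T v)‖ ^ 2 ≤ δ⁻¹ ^ 2 * (‖T‖ ^ 2 * ‖T v‖ ^ 2) := by
        apply mul_le_mul_of_nonneg_left h1 (by positivity)
      calc δ⁻¹ ^ 2 * ‖A (T v)‖ ^ 2 ≤ δ⁻¹ ^ 2 * (‖T‖ ^ 2 * ‖T v‖ ^ 2) := this
        _ ≤ δ⁻¹ ^ 2 * (δ * ‖T v‖ ^ 2) := by
            apply mul_le_mul_of_nonneg_left _ (by positivity)
            apply mul_le_mul_of_nonneg_right hTd (by positivity)
        _ = δ⁻¹ * ‖T v‖ ^ 2 := by field_simp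
    nlinarith [norm_nonneg (T v), sq_nonneg (‖T v‖), mul_pos hδ0 hδ0]
  calc ‖Zmap T g δ a - Zmap T g δ b‖
      = Real.sqrt (‖Zmap T g δ a - Zmap T g δ b‖ ^ 2) := (Real.sqrt_sq (norm_nonneg _)).symm
    _ ≤ Real.sqrt (‖v‖ ^ 2) := Real.sqrt_le_sqrt hsq
    _ = ‖v‖ := Real.sqrt_sq (norm_nonneg _)

end Zthy

section Coercive

variable {N₁ N₂ : ℕ}

lemma coercive_bound (hN₁ : 1 ≤ N₁) (hN₂ : 1 ≤ N₂) (T : Xg N₁ N₂ →L[ℝ] Xg N₁ N₂)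
    (one : Xg N₁ N₂) (hone : ∀ x, one x = 1) (hT1 : T one ≠ 0)
    (α : Fin N₁ × Fin N₂ → ℝ) (hα : ∀ x, 0 < α x) :
    ∃ ε : ℝ, 0 < ε ∧ ∀ u : Xg N₁ N₂, ε * ‖u‖ ≤ ‖T u‖ + Ralpha α u := by
  set q : Xg N₁ N₂ → ℝ := fun u => ‖T u‖ + Ralpha α u with hqdef
  have hα0 : ∀ x, 0 ≤ α x := fun x => (hα x).le
  have hqc : Continuous q := (T.continuous.norm).add (Ralpha_continuous α)
  have honene : one ≠ 0 := by
    intro h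
    have := hone (⟨0, hN₁⟩, ⟨0, hN₂⟩)
    rw [h] at this
    simp at this
  have hu₁ : ‖one‖⁻¹ • one ∈ Metric.sphere (0 : Xg N₁ N₂) 1 := by
    rw [mem_sphere_zero_iff_norm]
    exact norm_smul_inv_norm honene
  obtain ⟨m, hmS, hmin⟩ := (isCompact_sphere (0 : Xg N₁ N₂) 1).exists_isMinOn
    ⟨_, hu₁⟩ hqc.continuousOn
  have hmnorm : ‖m‖ = 1 := mem_sphere_zero_iff_norm.mp hmS
  have hq0 : ∀ u, 0 ≤ q u := fun u => add_nonneg (norm_nonneg _) (Ralpha_nonneg hα0 u)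
  have hqsmul : ∀ (c : ℝ), 0 ≤ c → ∀ u, q (c • u) = c * q u := by
    intro c hc u
    simp only [hqdef, map_smul, norm_smul, Real.norm_eq_abs, abs_of_nonneg hc,
      Ralpha_smul, mul_add]
  have hεpos : 0 < q m := by
    rcases lt_or_eq_of_le (hq0 m) with h | h
    · exact h
    · exfalso
      simp only [hqdef] at h
      have hT0 : ‖T m‖ = 0 ∧ Ralpha α m = 0 := by
        constructor <;> nlinarith [norm_nonneg (T m), Ralpha_nonneg hα0 m]
      have hgz : ∀ x, gradh m x = 0 := by
        intro x
        have hsum : Ralpha α m = 0 := hT0.2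
        rw [Ralpha_eq] at hsum
        have hterm := (Finset.sum_eq_zero_iff_of_nonneg
          (fun x _ => mul_nonneg (hα0 x) (nrm2_nonneg _ _))).mp hsum x (Finset.mem_univ x)
        have hnz : nrm2 (gradh m x).1 (gradh m x).2 = 0 := by
          rcases mul_eq_zero.mp hterm with h' | h'
          · exact absurd h' (ne_of_gt (hα x))
          · exact h'
        have hsq : (gradh m x).1 ^ 2 + (gradh m x).2 ^ 2 = 0 := by
          have := Real.sqrt_eq_zero (by positivity) |>.mp hnz
          exact this
        have h1 : (gradh m x).1 = 0 := by nlinarith [sq_nonneg (gradh m x).1, sq_nonneg (gradh m x).2]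
        have h2 : (gradh m x).2 = 0 := by nlinarith [sq_nonneg (gradh m x).1, sq_nonneg (gradh m x).2]
        exact Prod.ext h1 h2
      have hconst := grad_zero_const hN₁ hN₂ hgz
      set c := m (⟨0, hN₁⟩, ⟨0, hN₂⟩) with hc
      have hm_eq : m = c • one := by
        ext p
        rw [hconst p]
        show c = (c • one) p
        simp [hone p]
      have hTm : T m = c • T one := by rw [hm_eq, map_smul]
      have hc0 : c = 0 := by
        have := hT0.1
        rw [hTm, norm_smul, Real.norm_eq_abs] at this
        rcases mul_eq_zero.mp this with h' | h'
        · exact abs_eq_zero.mp h'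
        · exact absurd (norm_eq_zero.mp h') hT1
      rw [hm_eq, hc0, zero_smul] at hmnorm
      simp at hmnorm
  refine ⟨q m, hεpos, fun u => ?_⟩
  rcases eq_or_ne u 0 with rfl | hu
  · simp only [norm_zero, mul_zero]
    exact hq0 0
  · have hw : ‖u‖⁻¹ • u ∈ Metric.sphere (0 : Xg N₁ N₂) 1 := by
      rw [mem_sphere_zero_iff_norm]
      exact norm_smul_inv_norm hu
    have := hmin hw
    have hscale : q u = ‖u‖ * q (‖u‖⁻¹ • u) := by
      have : u = ‖u‖ • (‖u‖⁻¹ • u) := by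
        rw [smul_smul, mul_inv_cancel₀ (norm_ne_zero_iff.mpr hu), one_smul]
      nth_rewrite 1 [this]
      exact hqsmul _ (norm_nonneg u) _
    show q m * ‖u‖ ≤ q u
    rw [hscale, mul_comm (q m) ‖u‖]
    exact mul_le_mul_of_nonneg_left (hmin hw) (norm_nonneg u)

end Coercive

section TendSur

open Filter

lemma tendsto_Sur {N₁ N₂ : ℕ} (T : Xg N₁ N₂ →L[ℝ] Xg N₁ N₂) (g : Xg N₁ N₂)
    (α : Fin N₁ × Fin N₂ → ℝ) (δ : ℝ) {f h : ℕ → Xg N₁ N₂} {x y : Xg N₁ N₂}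
    (hf : Tendsto f atTop (nhds x)) (hh : Tendsto h atTop (nhds y)) :
    Tendsto (fun k => Sur T g α δ (f k) (h k)) atTop (nhds (Sur T g α δ x y)) := by
  simp only [Sur]
  have hTf : Tendsto (fun k => T (f k)) atTop (nhds (T x)) := (T.continuous.tendsto x).comp hf
  have hn1 : Tendsto (fun k => ‖T (f k) - g‖ ^ 2) atTop (nhds (‖T x - g‖ ^ 2)) :=
    ((hTf.sub tendsto_const_nhds).norm).pow 2
  have hR : Tendsto (fun k => Ralpha α (f k)) atTop (nhds (Ralpha α x)) :=
    ((Ralpha_continuous α).tendsto x).comp hf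
  have hn2 : Tendsto (fun k => ‖f k - h k‖ ^ 2) atTop (nhds (‖x - y‖ ^ 2)) :=
    ((hf.sub hh).norm).pow 2
  have hn3 : Tendsto (fun k => ‖T (f k - h k)‖ ^ 2) atTop (nhds (‖T (x - y)‖ ^ 2)) :=
    (((T.continuous.tendsto _).comp (hf.sub hh)).norm).pow 2
  exact (((hn1.const_mul _).add hR).add (hn2.const_mul _)).sub (hn3.const_mul _)

end TendSur

end Stmt13Aux

open Stmt13Aux Filter

set_option maxHeartbeats 2000000 in
theorem stmt13_part2 (N₁ N₂ : ℕ) (hN₁ : 1 ≤ N₁) (hN₂ : 1 ≤ N₂)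
    (T : Xg N₁ N₂ →L[ℝ] Xg N₁ N₂)
    (one : Xg N₁ N₂) (hone : ∀ x, one x = 1) (hT1 : T one ≠ 0)
    (g : Xg N₁ N₂) (α : Fin N₁ × Fin N₂ → ℝ) (hα : ∀ x, 0 < α x)
    (δ : ℝ) (hδ : ‖T‖ ^ 2 < δ) (useq : ℕ → Xg N₁ N₂)
    (hrec : ∀ n, ∀ u : Xg N₁ N₂, Sur T g α δ (useq (n + 1)) (useq n) ≤ Sur T g α δ u (useq n)) :
    ∃ ubar : Xg N₁ N₂, Filter.Tendsto useq Filter.atTop (nhds ubar) ∧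
        ∀ u : Xg N₁ N₂,
          (1 / 2) * ‖T ubar - g‖ ^ 2 + Ralpha α ubar ≤
            (1 / 2) * ‖T u - g‖ ^ 2 + Ralpha α u := by
  have hδ0 : 0 < δ := lt_of_le_of_lt (sq_nonneg _) hδ
  have hα0 : ∀ x, 0 ≤ α x := fun x => (hα x).le
  have hconv : ∀ u v : Xg N₁ N₂, ∀ t : ℝ, 0 ≤ t → t ≤ 1 →
      Ralpha α ((1 - t) • u + t • v) ≤ (1 - t) * Ralpha α u + t * Ralpha α v :=
    fun u v t h0 h1 => Ralpha_convex hα0 u v h0 h1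
  have hφc : Continuous (Ralpha α) := Ralpha_continuous α
  have hφ0 : ∀ u, 0 ≤ Ralpha α u := Ralpha_nonneg hα0
  have hSG : ∀ u a : Xg N₁ N₂, Sur T g α δ u a = Gf (Ralpha α) δ (Zmap T g δ a) u
      + (1 / 2 * ‖T a - g‖ ^ 2
        - 1 / (2 * δ) * ‖ContinuousLinearMap.adjoint T (T a - g)‖ ^ 2) :=
    fun u a => Sur_eq T g α hδ0 u a
  -- transfer of minimality between Sur and Gf
  have hiff : ∀ a m : Xg N₁ N₂, (∀ u, Sur T g α δ m a ≤ Sur T g α δ u a) ↔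
      (∀ u, Gf (Ralpha α) δ (Zmap T g δ a) m ≤ Gf (Ralpha α) δ (Zmap T g δ a) u) := by
    intro a m
    constructor
    · intro h u
      have h' := h u
      rw [hSG m a, hSG u a] at h'
      linarith
    · intro h u
      have h' := h u
      rw [hSG m a, hSG u a]
      linarith
  obtain ⟨Jf, hJapp⟩ : ∃ f : Xg N₁ N₂ → ℝ,
      ∀ u, f u = (1 / 2) * ‖T u - g‖ ^ 2 + Ralpha α u := ⟨_, fun u => rfl⟩
  obtain ⟨c, hcdef⟩ : ∃ c : ℝ, c = (δ - ‖T‖ ^ 2) / 2 := ⟨_, rfl⟩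
  have hc : 0 < c := by rw [hcdef]; linarith
  have hTle : ∀ v : Xg N₁ N₂, ‖T v‖ ^ 2 ≤ ‖T‖ ^ 2 * ‖v‖ ^ 2 := by
    intro v
    nlinarith [T.le_opNorm v, norm_nonneg (T v), norm_nonneg v, norm_nonneg T]
  have hSur_self : ∀ u, Sur T g α δ u u = Jf u := by
    intro u
    rw [hJapp]
    simp [Sur, sub_self]
  have hSur_ge : ∀ u a, Jf u + c * ‖u - a‖ ^ 2 ≤ Sur T g α δ u a := by
    intro u a
    rw [hJapp, hcdef]
    simp only [Sur]
    nlinarith [hTle (u - a)]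
  have hJ0 : ∀ u, 0 ≤ Jf u := by
    intro u
    rw [hJapp]
    have := hφ0 u
    positivity
  have hdesc : ∀ n, Jf (useq (n + 1)) + c * ‖useq (n + 1) - useq n‖ ^ 2 ≤ Jf (useq n) :=
    fun n => le_trans (hSur_ge _ _) (le_trans (hrec n (useq n)) (le_of_eq (hSur_self _)))
  have hJanti : ∀ n, Jf (useq (n + 1)) ≤ Jf (useq n) := by
    intro n
    have h1 := hdesc n
    nlinarith [mul_nonneg hc.le (sq_nonneg ‖useq (n + 1) - useq n‖)]
  have hJantitone : Antitone (fun n => Jf (useq n)) :=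
    antitone_nat_of_succ_le hJanti
  -- boundedness of the sequence
  obtain ⟨ε, hε, hq⟩ := coercive_bound hN₁ hN₂ T one hone hT1 α hα
  obtain ⟨M, hMdef⟩ : ∃ M : ℝ, M = Jf (useq 0) := ⟨_, rfl⟩
  have hJle : ∀ n, Jf (useq n) ≤ M := fun n => hMdef ▸ hJantitone (Nat.zero_le n)
  have hM0 : 0 ≤ M := hMdef ▸ hJ0 _
  have hbnd : ∀ n, ‖useq n‖ ≤ (Real.sqrt (2 * M) + ‖g‖ + M) / ε := by
    intro n
    have h1 : 1 / 2 * ‖T (useq n) - g‖ ^ 2 ≤ M := by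
      have h := hJle n
      rw [hJapp] at h
      nlinarith [hφ0 (useq n)]
    have h2 : ‖T (useq n) - g‖ ≤ Real.sqrt (2 * M) := by
      rw [Real.le_sqrt (norm_nonneg _)] <;> linarith
    have h3 : ‖T (useq n)‖ ≤ Real.sqrt (2 * M) + ‖g‖ := by
      calc ‖T (useq n)‖ = ‖(T (useq n) - g) + g‖ := by rw [sub_add_cancel]
        _ ≤ ‖T (useq n) - g‖ + ‖g‖ := norm_add_le _ _
        _ ≤ Real.sqrt (2 * M) + ‖g‖ := by linarith
    have h4 : Ralpha α (useq n) ≤ M := by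
      have h := hJle n
      rw [hJapp] at h
      nlinarith [sq_nonneg ‖T (useq n) - g‖]
    have h5 : ε * ‖useq n‖ ≤ Real.sqrt (2 * M) + ‖g‖ + M := by
      calc ε * ‖useq n‖ ≤ ‖T (useq n)‖ + Ralpha α (useq n) := hq _
        _ ≤ Real.sqrt (2 * M) + ‖g‖ + M := by linarith
    rw [le_div_iff₀ hε]
    linarith [h5]
  -- the successive differences tend to zero
  have hJbdd : BddBelow (Set.range fun n => Jf (useq n)) :=
    ⟨0, fun y ⟨n, hn⟩ => hn ▸ hJ0 (useq n)⟩
  have hJtend : Tendsto (fun n => Jf (useq n)) atTop (nhds (⨅ n, Jf (useq n))) :=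
    tendsto_atTop_ciInf hJantitone hJbdd
  have hJtend' : Tendsto (fun n => Jf (useq (n + 1))) atTop (nhds (⨅ n, Jf (useq n))) :=
    hJtend.comp (tendsto_add_atTop_nat 1)
  have hdiff : Tendsto (fun n => Jf (useq n) - Jf (useq (n + 1))) atTop (nhds 0) := by
    have := hJtend.sub hJtend'
    simpa using this
  have hdn2 : Tendsto (fun n => ‖useq (n + 1) - useq n‖ ^ 2) atTop (nhds 0) := by
    apply squeeze_zero (fun n => sq_nonneg _)
      (g := fun n => (1 / c) * (Jf (useq n) - Jf (useq (n + 1))))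
    · intro n
      have h1 := hdesc n
      rw [mul_comm, mul_one_div, le_div_iff₀ hc]
      linarith
    · have := hdiff.const_mul (1 / c)
      simpa using this
  have hdn : Tendsto (fun n => ‖useq (n + 1) - useq n‖) atTop (nhds 0) := by
    rw [show (fun n => ‖useq (n + 1) - useq n‖)
        = fun n => Real.sqrt (‖useq (n + 1) - useq n‖ ^ 2) from
      funext fun n => (Real.sqrt_sq (norm_nonneg _)).symm]
    exact (Real.continuous_sqrt.tendsto' 0 0 Real.sqrt_zero).comp hdn2
  -- convergent subsequence
  have hbM : ∀ n, useq n ∈ Metric.closedBall (0 : Xg N₁ N₂)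
      ((Real.sqrt (2 * M) + ‖g‖ + M) / ε) := by
    intro n
    rw [Metric.mem_closedBall, dist_zero_right]
    exact hbnd n
  obtain ⟨w, -, ψ, hψmono, hψtend⟩ :=
    tendsto_subseq_of_bounded Metric.isBounded_closedBall hbM
  have hψ1 : Tendsto (fun k => useq (ψ k + 1)) atTop (nhds w) := by
    have h1 : Tendsto (fun k => useq (ψ k + 1) - useq (ψ k)) atTop (nhds 0) := by
      rw [tendsto_zero_iff_norm_tendsto_zero]
      exact hdn.comp hψmono.tendsto_atTop
    have h2 := h1.add hψtend
    simp only [zero_add] at h2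
    have heq : (fun k => (useq (ψ k + 1) - useq (ψ k)) + (useq ∘ ψ) k)
        = fun k => useq (ψ k + 1) := by
      funext k
      simp [Function.comp]
    rwa [heq] at h2
  -- strong per-step inequality
  have hmGf : ∀ n, ∀ v, Gf (Ralpha α) δ (Zmap T g δ (useq n)) (useq (n + 1))
      ≤ Gf (Ralpha α) δ (Zmap T g δ (useq n)) v :=
    fun n => (hiff (useq n) (useq (n + 1))).mp (hrec n)
  have hstrong : ∀ n, ∀ u : Xg N₁ N₂, Sur T g α δ (useq (n + 1)) (useq n)
      + δ / 2 * ‖u - useq (n + 1)‖ ^ 2 ≤ Sur T g α δ u (useq n) := by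
    intro n u
    have := Gf_strong hδ0 hconv (hmGf n) u
    rw [hSG (useq (n + 1)) (useq n), hSG u (useq n)]
    linarith
  -- pass to the limit
  have hkey : ∀ u : Xg N₁ N₂, Sur T g α δ w w + δ / 2 * ‖u - w‖ ^ 2 ≤ Sur T g α δ u w := by
    intro u
    have hl : Tendsto (fun k => Sur T g α δ (useq (ψ k + 1)) (useq (ψ k))
        + δ / 2 * ‖u - useq (ψ k + 1)‖ ^ 2) atTop
        (nhds (Sur T g α δ w w + δ / 2 * ‖u - w‖ ^ 2)) := by
      apply Tendsto.add
      · exact tendsto_Sur T g α δ hψ1 hψtend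
      · exact (((tendsto_const_nhds.sub hψ1).norm).pow 2).const_mul _
    have hr : Tendsto (fun k => Sur T g α δ u (useq (ψ k))) atTop
        (nhds (Sur T g α δ u w)) :=
      tendsto_Sur T g α δ tendsto_const_nhds hψtend
    exact le_of_tendsto_of_tendsto' hl hr (fun k => hstrong (ψ k) u)
  have hwmin : ∀ u, Jf w ≤ Jf u := by
    intro u
    have hk := hkey u
    have h1 : Sur T g α δ w w = Jf w := hSur_self w
    have h2 : Sur T g α δ u w = Jf u + δ / 2 * ‖u - w‖ ^ 2 - 1 / 2 * ‖T (u - w)‖ ^ 2 := by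
      rw [hJapp]
      simp only [Sur]
      try ring
    rw [h1, h2] at hk
    nlinarith [sq_nonneg ‖T (u - w)‖, norm_nonneg (T (u - w))]
  -- w is a fixed point
  have hwfix : ∀ v, Gf (Ralpha α) δ (Zmap T g δ w) w ≤ Gf (Ralpha α) δ (Zmap T g δ w) v := by
    apply (hiff w w).mp
    intro u
    have := hkey u
    nlinarith [sq_nonneg ‖u - w‖]
  have hfej : ∀ n, ‖useq (n + 1) - w‖ ≤ ‖useq n - w‖ := by
    intro n
    calc ‖useq (n + 1) - w‖ ≤ ‖Zmap T g δ (useq n) - Zmap T g δ w‖ :=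
        Gf_nonexpansive hδ0 hconv (hmGf n) hwfix
      _ ≤ ‖useq n - w‖ := Zmap_nonexpansive T g hδ (useq n) w
  -- conclude convergence of the whole sequence
  have hdantitone : Antitone (fun n => ‖useq n - w‖) := antitone_nat_of_succ_le hfej
  have hdbdd : BddBelow (Set.range fun n => ‖useq n - w‖) :=
    ⟨0, fun y ⟨n, hn⟩ => hn ▸ norm_nonneg _⟩
  have hdtend : Tendsto (fun n => ‖useq n - w‖) atTop (nhds (⨅ n, ‖useq n - w‖)) :=
    tendsto_atTop_ciInf hdantitone hdbdd
  have hsub0 : Tendsto (fun k => ‖useq (ψ k) - w‖) atTop (nhds 0) := by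
    have h1 : Tendsto (fun k => useq (ψ k) - w) atTop (nhds 0) := by
      have := hψtend.sub (tendsto_const_nhds (x := w))
      simpa using this
    simpa using h1.norm
  have hinf0 : (⨅ n, ‖useq n - w‖) = 0 :=
    tendsto_nhds_unique (hdtend.comp hψmono.tendsto_atTop) hsub0
  have hd0 : Tendsto (fun n => ‖useq n - w‖) atTop (nhds 0) := hinf0 ▸ hdtend
  refine ⟨w, ?_, ?_⟩
  · rw [tendsto_iff_norm_sub_tendsto_zero]
    exact hd0
  · intro u
    have := hwmin u
    rw [hJapp, hJapp] at this
    exact this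


/-- The surrogate functional has a unique minimizer in its first
argument, and the surrogate iteration converges to a minimizer of
`J₂(u,α) = (1/2)‖Tu-g‖₂² + R_α(u)`. -/
theorem stmt13 (N₁ N₂ : ℕ) (hN₁ : 1 ≤ N₁) (hN₂ : 1 ≤ N₂)
    (T : Xg N₁ N₂ →L[ℝ] Xg N₁ N₂)
    (one : Xg N₁ N₂) (hone : ∀ x, one x = 1) (hT1 : T one ≠ 0)
    (g : Xg N₁ N₂) (α : Fin N₁ × Fin N₂ → ℝ) (hα : ∀ x, 0 < α x)
    (δ : ℝ) (hδ : ‖T‖ ^ 2 < δ) :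
    (∀ a : Xg N₁ N₂, ∃! m : Xg N₁ N₂, ∀ u : Xg N₁ N₂, Sur T g α δ m a ≤ Sur T g α δ u a) ∧
    (∀ u₀ : Xg N₁ N₂, ∀ useq : ℕ → Xg N₁ N₂, useq 0 = u₀ →
      (∀ n, ∀ u : Xg N₁ N₂, Sur T g α δ (useq (n + 1)) (useq n) ≤ Sur T g α δ u (useq n)) →
      ∃ ubar : Xg N₁ N₂, Filter.Tendsto useq Filter.atTop (nhds ubar) ∧
        ∀ u : Xg N₁ N₂,
          (1 / 2) * ‖T ubar - g‖ ^ 2 + Ralpha α ubar ≤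
            (1 / 2) * ‖T u - g‖ ^ 2 + Ralpha α u) := by
  have hδ0 : 0 < δ := lt_of_le_of_lt (sq_nonneg _) hδ
  have hα0 : ∀ x, 0 ≤ α x := fun x => (hα x).le
  have hconv : ∀ u v : Xg N₁ N₂, ∀ t : ℝ, 0 ≤ t → t ≤ 1 →
      Ralpha α ((1 - t) • u + t • v) ≤ (1 - t) * Ralpha α u + t * Ralpha α v :=
    fun u v t h0 h1 => Ralpha_convex hα0 u v h0 h1
  have hφc : Continuous (Ralpha α) := Ralpha_continuous α
  have hφ0 : ∀ u, 0 ≤ Ralpha α u := Ralpha_nonneg hα0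
  have hSG : ∀ u a : Xg N₁ N₂, Sur T g α δ u a = Gf (Ralpha α) δ (Zmap T g δ a) u
      + (1 / 2 * ‖T a - g‖ ^ 2
        - 1 / (2 * δ) * ‖ContinuousLinearMap.adjoint T (T a - g)‖ ^ 2) :=
    fun u a => Sur_eq T g α hδ0 u a
  -- transfer of minimality between Sur and Gf
  have hiff : ∀ a m : Xg N₁ N₂, (∀ u, Sur T g α δ m a ≤ Sur T g α δ u a) ↔
      (∀ u, Gf (Ralpha α) δ (Zmap T g δ a) m ≤ Gf (Ralpha α) δ (Zmap T g δ a) u) := by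
    intro a m
    constructor
    · intro h u
      have h' := h u
      rw [hSG m a, hSG u a] at h'
      linarith
    · intro h u
      have h' := h u
      rw [hSG m a, hSG u a]
      linarith
  constructor
  · intro a
    obtain ⟨m, hm⟩ := Gf_exists_min hδ0 hφc hφ0 (Zmap T g δ a)
    refine ⟨m, (hiff a m).mpr hm, fun m' hm' => ?_⟩
    exact Gf_unique hδ0 hconv hm ((hiff a m').mp hm')
  · intro u₀ useq h0 hrec
    exact stmt13_part2 N₁ N₂ hN₁ hN₂ T one hone hT1 g α hα δ hδ useq hrec

end
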